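/- Let M be a complex symmetric n×n matrix in the Siegel upper half space (i.e., Im(M) is positive definite), with n ≥ 2. Let M₁₁ be the (n-1)×(n-1) submatrix of M obtained by deleting the first row and first column. Then det(M)/det(M₁₁) is not a real number. -/

import Mathlib

open Finset Matrix

lemma sum_antisym {m : Type*} [Fintype m] (X : Matrix m m ℂ) (hX : X.IsSymm)
    (a b : m → ℝ) :
    ∑ i, ∑ j, (X i j).re * (a i * b j) = ∑ i, ∑ j, (X i j).re * (b i * a j) := by
  rw [Finset.sum_comm]
  refine Finset.sum_congr rfl fun i _ => Finset.sum_congr rfl fun j _ => ?_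
  rw [hX.apply]
  ring

lemma quad_im {m : Type*} [Fintype m] (M : Matrix m m ℂ) (hsym : M.IsSymm) (v : m → ℂ) :
    (star v ⬝ᵥ M.mulVec v).im =
      (fun i => (v i).re) ⬝ᵥ (M.map Complex.im).mulVec (fun i => (v i).re)
      + (fun i => (v i).im) ⬝ᵥ (M.map Complex.im).mulVec (fun i => (v i).im) := by
  have h := sum_antisym M hsym (fun i => (v i).re) (fun i => (v i).im)
  simp only [dotProduct, mulVec, Pi.star_apply, Matrix.map_apply,
    Finset.mul_sum, Complex.im_sum, ← Finset.sum_add_distrib]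
  calc ∑ i, ∑ j, (star (v i) * (M i j * v j)).im
      = ∑ i, ∑ j, (((M i j).im * ((v i).re * (v j).re) + (M i j).im * ((v i).im * (v j).im))
          + ((M i j).re * ((v i).re * (v j).im) - (M i j).re * ((v i).im * (v j).re))) := by
        refine Finset.sum_congr rfl fun i _ => Finset.sum_congr rfl fun j _ => ?_
        simp only [Complex.star_def, Complex.mul_im, Complex.mul_re,
          Complex.conj_re, Complex.conj_im]
        ring
    _ = ∑ i, ∑ j, ((M i j).im * ((v i).re * (v j).re) + (M i j).im * ((v i).im * (v j).im)) := by
        simp only [Finset.sum_add_distrib, Finset.sum_sub_distrib, h, sub_self, add_zero]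
    _ = ∑ i, ∑ j, ((v i).re * ((M i j).im * (v j).re) + (v i).im * ((M i j).im * (v j).im)) := by
        refine Finset.sum_congr rfl fun i _ => Finset.sum_congr rfl fun j _ => ?_
        ring

lemma quad_im_pos {m : Type*} [Fintype m] (M : Matrix m m ℂ) (hsym : M.IsSymm)
    (hpos : (M.map Complex.im).PosDef) (v : m → ℂ) (hv : v ≠ 0) :
    0 < (star v ⬝ᵥ M.mulVec v).im := by
  rw [quad_im M hsym v]
  set a : m → ℝ := fun i => (v i).re
  set b : m → ℝ := fun i => (v i).im
  have hab : a ≠ 0 ∨ b ≠ 0 := by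
    by_contra h
    push_neg at h
    apply hv
    funext i
    have ha := congrFun h.1 i
    have hb := congrFun h.2 i
    exact Complex.ext ha hb
  rcases hab with ha | hb
  · have h1 := hpos.dotProduct_mulVec_pos ha
    have h2 := hpos.posSemidef.dotProduct_mulVec_nonneg b
    simp only [star_trivial] at h1 h2
    linarith
  · have h1 := hpos.posSemidef.dotProduct_mulVec_nonneg a
    have h2 := hpos.dotProduct_mulVec_pos hb
    simp only [star_trivial] at h1 h2
    linarith

lemma det_ne_zero_of_siegel {m : Type*} [Fintype m] [DecidableEq m] (M : Matrix m m ℂ)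
    (hsym : M.IsSymm) (hpos : (M.map Complex.im).PosDef) : M.det ≠ 0 := by
  intro h
  obtain ⟨v, hv, hMv⟩ := (Matrix.exists_mulVec_eq_zero_iff).2 h
  have := quad_im_pos M hsym hpos v hv
  rw [hMv, dotProduct_zero] at this
  simp at this

/-- For `M` in the Siegel upper half space `H_n` (complex symmetric with positive definite
imaginary part), `n ≥ 2`, the ratio `det M / det M₁₁` is not real, where `M₁₁` deletes the
first row and column of `M`. -/
theorem det_ratio_not_real (n : ℕ) (M : Matrix (Fin (n + 2)) (Fin (n + 2)) ℂ)
    (hsym : M.IsSymm) (hpos : (M.map Complex.im).PosDef) :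
    ∀ r : ℝ, M.det / (M.submatrix Fin.succ Fin.succ).det ≠ (r : ℂ) := by
  intro r hr
  set M₁ := M.submatrix (Fin.succ : Fin (n+1) → Fin (n+2)) Fin.succ with hM₁
  -- M₁ is symmetric with positive definite imaginary part
  have hsym1 : M₁.IsSymm := by
    rw [Matrix.IsSymm, hM₁, transpose_submatrix, hsym.eq]
  have hpos1 : (M₁.map Complex.im).PosDef := by
    refine Matrix.PosDef.of_dotProduct_mulVec_pos ?_ ?_
    · have := (hpos.1.submatrix (Fin.succ : Fin (n+1) → Fin (n+2)))
      simpa [Matrix.submatrix_map] using this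
    · intro x hx
      have hy : (Fin.cons 0 x : Fin (n+2) → ℝ) ≠ 0 := by
        intro h
        apply hx
        funext i
        have := congrFun h i.succ
        simpa using this
      have := hpos.dotProduct_mulVec_pos (x := Fin.cons 0 x) hy
      simp only [star_trivial] at this ⊢
      convert this using 1
      simp [dotProduct, mulVec, Fin.sum_univ_succ, Matrix.submatrix_map, hM₁,
        Fin.succ_zero_eq_one]
  have hd1 : M.det ≠ 0 := det_ne_zero_of_siegel M hsym hpos
  have hd2 : M₁.det ≠ 0 := det_ne_zero_of_siegel M₁ hsym1 hpos1
  -- the vector w = M⁻¹ e₀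
  set w : Fin (n+2) → ℂ := M⁻¹ *ᵥ Pi.single 0 1 with hw
  have hMw : M *ᵥ w = Pi.single 0 1 := by
    rw [hw, Matrix.mulVec_mulVec, Matrix.mul_nonsing_inv M (isUnit_iff_ne_zero.2 hd1),
      Matrix.one_mulVec]
  have hwne : w ≠ 0 := by
    intro h
    rw [h, Matrix.mulVec_zero] at hMw
    have := congrFun hMw 0
    simp [Pi.single_apply] at this
  have him := quad_im_pos M hsym hpos w hwne
  rw [hMw] at him
  have hdp : star w ⬝ᵥ Pi.single (0 : Fin (n+2)) (1:ℂ) = star (w 0) := by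
    simp [dotProduct_single]
  rw [hdp] at him
  have hw0im : (w 0).im < 0 := by
    have : (star (w 0)).im = -(w 0).im := by simp [Complex.star_def]
    rw [this] at him
    linarith
  -- compute w 0 = det M₁ / det M
  have hw0 : w 0 = M₁.det / M.det := by
    have h1 : w 0 = M⁻¹ 0 0 := by
      rw [hw]
      simp [Matrix.mulVec_single]
    rw [h1, Matrix.inv_def, Matrix.smul_apply,
      Matrix.adjugate_fin_succ_eq_det_submatrix]
    simp [Fin.succAbove_zero, hM₁, div_eq_mul_inv, mul_comm, Ring.inverse_eq_inv']
    ring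
  -- derive contradiction
  have hr0 : (r : ℂ) ≠ 0 := by
    intro h
    rw [h, div_eq_zero_iff] at hr
    exact hd1 (hr.resolve_right hd2)
  have : w 0 = ((r : ℂ))⁻¹ := by
    rw [hw0, ← hr, inv_div]
  rw [this, ← Complex.ofReal_inv] at hw0im
  simp at hw0im
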